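/- Rational rotation approximation via Pythagorean triples: there exists a constant C > 0 such that for every point u on the unit circle of ℝ² and every δ with 0 < δ ≤ 1, there exist integers a, b, c with 0 < c, (c : ℝ) ≤ C/δ², a² + b² = c², and the point with coordinates (a/c, b/c) lies at distance less than δ from u. -/

import Mathlib

set_option maxHeartbeats 1000000

noncomputable section

/-- The Euclidean plane. -/
abbrev Plane : Type := EuclideanSpace ℝ (Fin 2)

/-- The point of the plane with the given coordinates. -/
def pt (x y : ℝ) : Plane := (EuclideanSpace.equiv (Fin 2) ℝ).symm ![x, y]

/-- Rational rotation approximation via Pythagorean triples: there is a constant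
`C > 0` such that any point of the unit circle can be approximated within any
`δ ∈ (0, 1]` by a point `(a/c, b/c)` with `a² + b² = c²` and `c ≤ C/δ²`. -/
lemma dist_pt (p q x y : ℝ) : dist (pt p q) (pt x y) = Real.sqrt ((p-x)^2 + (q-y)^2) := by
  simp [pt, EuclideanSpace.dist_eq, Fin.sum_univ_two, Real.dist_eq, sq_abs]

lemma pt_eq (u : Plane) : u = pt (u 0) (u 1) := by
  ext i; fin_cases i <;> simp [pt]

lemma sphere_coord (u : Plane) (hu : u ∈ Metric.sphere (0:Plane) 1) :
    (u 0)^2 + (u 1)^2 = 1 := by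
  have := mem_sphere_zero_iff_norm.mp hu
  have h2 : ‖u‖^2 = 1 := by rw [this]; norm_num
  rw [EuclideanSpace.norm_eq] at h2
  rw [Real.sq_sqrt (by positivity)] at h2
  simpa [Fin.sum_univ_two, sq_abs] using h2
lemma alg (s t : ℝ) : ((1-s^2)/(1+s^2) - (1-t^2)/(1+t^2))^2 + (2*s/(1+s^2) - 2*t/(1+t^2))^2
    ≤ 4*(s-t)^2 := by
  have hs : (0:ℝ) < 1+s^2 := by positivity
  have ht : (0:ℝ) < 1+t^2 := by positivity
  have eq1 : ((1-s^2)/(1+s^2) - (1-t^2)/(1+t^2))^2 + (2*s/(1+s^2) - 2*t/(1+t^2))^2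
      = 4*(s-t)^2/((1+s^2)*(1+t^2)) := by
    field_simp
    ring
  rw [eq1]
  have hD : (1:ℝ) ≤ (1+s^2)*(1+t^2) := by nlinarith [sq_nonneg s, sq_nonneg t, sq_nonneg (s*t)]
  calc 4*(s-t)^2/((1+s^2)*(1+t^2)) ≤ 4*(s-t)^2/1 := by
        apply div_le_div_of_nonneg_left (by positivity) (by norm_num) hD
    _ = 4*(s-t)^2 := by ring

lemma param_x (x y : ℝ) (hxy : x^2+y^2=1) (hx : 0 ≤ x) :
    x = (1-(y/(1+x))^2)/(1+(y/(1+x))^2) := by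
  have h1 : (0:ℝ) < 1+x := by linarith
  have h2 : (1:ℝ)+(y/(1+x))^2 ≠ 0 := by positivity
  field_simp
  linear_combination (x+1) * hxy

lemma param_y (x y : ℝ) (hxy : x^2+y^2=1) (hx : 0 ≤ x) :
    y = 2*(y/(1+x))/(1+(y/(1+x))^2) := by
  have h1 : (0:ℝ) < 1+x := by linarith
  field_simp
  linear_combination y * hxy
lemma key (x y : ℝ) (hxy : x^2+y^2=1) (hx : 0 ≤ x) (δ : ℝ) (hδ : 0 < δ) (hδ1 : δ ≤ 1) :
    ∃ a b c : ℤ, 0 < c ∧ (c:ℝ) ≤ 18/δ^2 ∧ a^2+b^2 = c^2 ∧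
      ((a:ℝ)/c - x)^2 + ((b:ℝ)/c - y)^2 < δ^2 := by
  obtain ⟨t, ht⟩ : ∃ t:ℝ, t = y/(1+x) := ⟨_, rfl⟩
  have h1x : (0:ℝ) < 1 + x := by linarith
  have hd2 : (2:ℝ) ≤ 2/δ := by
    rw [le_div_iff₀ hδ]; linarith
  set m : ℤ := ⌈(2:ℝ)/δ⌉ with hm
  have hm2 : (2:ℝ)/δ ≤ m := Int.le_ceil _
  have hmpos : (0:ℝ) < m := by linarith
  have hm3 : (m:ℝ) ≤ 3/δ := by
    have h1 : (m:ℝ) < 2/δ + 1 := Int.ceil_lt_add_one _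
    have h2 : (1:ℝ) ≤ 1/δ := by rw [le_div_iff₀ hδ]; linarith
    have h3 : (2:ℝ)/δ + 1/δ = 3/δ := by ring
    linarith
  set n : ℤ := round ((m:ℝ)*t) with hn
  have hround : |(m:ℝ)*t - n| ≤ 1/2 := abs_sub_round _
  have ht2 : t^2 ≤ 1 := by
    rw [ht, div_pow, div_le_one (by positivity)]
    nlinarith
  have hnm : |n| ≤ m := by
    have h2 : |(m:ℝ)*t| ≤ m := by
      rw [abs_mul, abs_of_pos hmpos]
      nlinarith [abs_nonneg t, sq_abs t]
    have h1 : |(n:ℝ)| ≤ (m:ℝ) + 1/2 := by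
      calc |(n:ℝ)| ≤ |(n:ℝ) - (m:ℝ)*t| + |(m:ℝ)*t| := by
            have := abs_sub_abs_le_abs_sub (n:ℝ) ((m:ℝ)*t)
            linarith [abs_nonneg ((n:ℝ) - (m:ℝ)*t)]
        _ ≤ 1/2 + m := by rw [abs_sub_comm]; linarith
        _ = m + 1/2 := by ring
    have h3 : ((|n|:ℤ):ℝ) < (m:ℤ) + 1 := by push_cast [Int.cast_abs]; linarith
    have h4 : |n| < m + 1 := by exact_mod_cast h3
    omega
  have hn2 : (n:ℝ)^2 ≤ (m:ℝ)^2 := by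
    have h5 : |(n:ℝ)| ≤ (m:ℝ) := by exact_mod_cast hnm
    nlinarith [sq_abs (n:ℝ), abs_nonneg (n:ℝ)]
  clear_value n m
  refine ⟨m^2 - n^2, 2*m*n, m^2 + n^2, ?_, ?_, by ring, ?_⟩
  · have : 0 < m := by exact_mod_cast hmpos
    nlinarith [sq_nonneg n]
  · calc ((m^2+n^2 : ℤ):ℝ) ≤ 2*(m:ℝ)^2 := by push_cast; linarith
      _ ≤ 2*(3/δ)^2 := by nlinarith
      _ = 18/δ^2 := by ring
  · set s : ℝ := (n:ℝ)/m with hs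
    have hs2 : (0:ℝ) < 1 + s^2 := by positivity
    have ha : ((m^2 - n^2 : ℤ):ℝ)/((m^2+n^2 : ℤ):ℝ) = (1-s^2)/(1+s^2) := by
      push_cast
      rw [hs]
      field_simp
      try ring
    have hb : ((2*m*n : ℤ):ℝ)/((m^2+n^2 : ℤ):ℝ) = 2*s/(1+s^2) := by
      push_cast
      rw [hs]
      field_simp
      try ring
    have hx' : x = (1-t^2)/(1+t^2) := by rw [ht]; exact param_x x y hxy hx
    have hy' : y = 2*t/(1+t^2) := by rw [ht]; exact param_y x y hxy hx
    have hst : |s - t| ≤ δ/4 := by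
      have he : s - t = ((n:ℝ) - m*t)/m := by rw [hs]; field_simp
      rw [he, abs_div, abs_of_pos hmpos, div_le_iff₀ hmpos, abs_sub_comm]
      calc |(m:ℝ)*t - n| ≤ 1/2 := hround
        _ ≤ δ/4 * (2/δ) := by rw [div_mul_div_comm, le_div_iff₀ (by positivity)]; ring_nf; linarith
        _ ≤ δ/4 * m := by nlinarith
    have hst2 : (s-t)^2 ≤ (δ/4)^2 := by
      obtain ⟨hl, hr⟩ := abs_le.mp hst
      exact sq_le_sq' (by linarith) hr
    rw [ha, hb]
    calc ((1-s^2)/(1+s^2) - x)^2 + (2*s/(1+s^2) - y)^2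
        = ((1-s^2)/(1+s^2) - (1-t^2)/(1+t^2))^2 + (2*s/(1+s^2) - 2*t/(1+t^2))^2 := by
          rw [hx', hy']
      _ ≤ 4*(s-t)^2 := alg s t
      _ ≤ 4*(δ/4)^2 := by linarith
      _ < δ^2 := by nlinarith
theorem rational_rotation_approx :
    ∃ C > (0 : ℝ), ∀ u ∈ Metric.sphere (0 : Plane) 1,
      ∀ δ : ℝ, 0 < δ → δ ≤ 1 →
        ∃ a b c : ℤ, 0 < c ∧ (c : ℝ) ≤ C / δ ^ 2 ∧ a ^ 2 + b ^ 2 = c ^ 2 ∧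
          dist (pt ((a : ℝ) / c) ((b : ℝ) / c)) u < δ := by
  refine ⟨18, by norm_num, fun u hu δ hδ hδ1 => ?_⟩
  set x := u 0 with hxdef
  set y := u 1 with hydef
  have hxy : x^2 + y^2 = 1 := sphere_coord u hu
  have hu' : u = pt x y := pt_eq u
  rcases le_or_gt 0 x with hx | hx
  · obtain ⟨a, b, c, hc, hC, hpy, hd⟩ := key x y hxy hx δ hδ hδ1
    refine ⟨a, b, c, hc, hC, hpy, ?_⟩
    rw [hu', dist_pt, Real.sqrt_lt' hδ]
    exact hd
  · have hxy' : (-x)^2 + (-y)^2 = 1 := by linear_combination hxy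
    obtain ⟨a, b, c, hc, hC, hpy, hd⟩ := key (-x) (-y) hxy' (by linarith) δ hδ hδ1
    refine ⟨-a, -b, c, hc, hC, by linear_combination hpy, ?_⟩
    rw [hu', dist_pt, Real.sqrt_lt' hδ]
    have he : (((-a : ℤ):ℝ)/c - x)^2 + (((-b : ℤ):ℝ)/c - y)^2
        = ((a:ℝ)/c - -x)^2 + ((b:ℝ)/c - -y)^2 := by push_cast; ring
    rw [he]
    exact hd
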